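/- Let 0 < R₁ < R₂ and let f : [R₁, R₂] → ℝ be continuously differentiable with f(R₁) = f(R₂) = 0. Then ∫_{R₁}^{R₂} f(r)² r dr ≤ (R₂(R₂−R₁)²)/(R₁ π²) · ∫_{R₁}^{R₂} (f'(r))² r dr. -/

import Mathlib

open Set MeasureTheory intervalIntegral

lemma wirtinger_aux (a b : ℝ) (hab : a < b) (f G : ℝ → ℝ)
    (hfc : ContinuousOn f (Set.Icc a b)) (hGc : ContinuousOn G (Set.Icc a b))
    (hd : ∀ x ∈ Set.Ioo a b, HasDerivAt f (G x) x)
    (ha : f a = 0) (hb : f b = 0) (δ : ℝ) (hδ : 0 < δ) :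
    ∫ x in a..b, (f x)^2 ≤ ((b - a + δ)/Real.pi)^2 * ∫ x in a..b, (G x)^2 := by
  have hL : 0 < b - a + δ := by linarith
  set c : ℝ := Real.pi / (b - a + δ) with hc
  have hcpos : 0 < c := div_pos Real.pi_pos hL
  set θ : ℝ → ℝ := fun x => c * (x - (a - δ/2)) with hθ
  have hsin : ∀ x ∈ Set.Icc a b, 0 < Real.sin (θ x) := by
    intro x hx
    apply Real.sin_pos_of_pos_of_lt_pi
    · have : 0 < x - (a - δ/2) := by have := hx.1; linarith
      positivity
    · have h1 : x - (a - δ/2) < b - a + δ := by have := hx.2; linarith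
      have := mul_lt_mul_of_pos_left h1 hcpos
      calc θ x < c * (b - a + δ) := this
        _ = Real.pi := by rw [hc, div_mul_cancel₀ _ hL.ne']
  set φ : ℝ → ℝ := fun x => c * Real.cos (θ x) / Real.sin (θ x) with hφ
  have hθd : ∀ x : ℝ, HasDerivAt θ c x := by
    intro x
    simpa using ((hasDerivAt_id x).sub_const (a - δ/2)).const_mul c
  have hφd : ∀ x ∈ Set.Icc a b, HasDerivAt φ (-(c^2) / (Real.sin (θ x))^2) x := by
    intro x hx
    have hs := (hsin x hx).ne'
    have h1 : HasDerivAt (fun y => c * Real.cos (θ y)) (-(c^2) * Real.sin (θ x)) x := by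
      have := ((Real.hasDerivAt_cos (θ x)).comp x (hθd x)).const_mul c
      exact this.congr_deriv (by ring)
    have h2 : HasDerivAt (fun y => Real.sin (θ y)) (Real.cos (θ x) * c) x :=
      (Real.hasDerivAt_sin (θ x)).comp x (hθd x)
    have := h1.div h2 hs
    refine this.congr_deriv ?_; congr 1
    have hsc := Real.sin_sq_add_cos_sq (θ x)
    linear_combination (-(c^2)) * hsc

  have hθc : Continuous θ := by fun_prop
  have hφc : ContinuousOn φ (Set.Icc a b) := by
    apply ContinuousOn.div
    · exact (continuous_const.mul (Real.continuous_cos.comp hθc)).continuousOn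
    · exact (Real.continuous_sin.comp hθc).continuousOn
    · exact fun x hx => (hsin x hx).ne'
  set F : ℝ → ℝ := fun x => φ x * (f x)^2 with hF
  set F' : ℝ → ℝ := fun x => (-(c^2) / (Real.sin (θ x))^2) * (f x)^2 + φ x * (2 * f x * G x) with hF'
  have hF'c : ContinuousOn F' (Set.Icc a b) := by
    apply ContinuousOn.add
    · apply ContinuousOn.mul
      · exact ContinuousOn.div continuousOn_const
          ((Real.continuous_sin.comp hθc).continuousOn.pow 2)
          (fun x hx => pow_ne_zero 2 (hsin x hx).ne')
      · exact hfc.pow 2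
    · exact hφc.mul ((continuousOn_const.mul hfc).mul hGc)
  have hab' : a ≤ b := hab.le
  have huIcc : Set.uIcc a b = Set.Icc a b := Set.uIcc_of_le hab'
  have hF'int : IntervalIntegrable F' volume a b := by
    apply ContinuousOn.intervalIntegrable; rwa [huIcc]
  have hFTC : ∫ x in a..b, F' x = 0 := by
    rw [intervalIntegral.integral_eq_sub_of_hasDeriv_right_of_le hab'
      (hφc.mul (hfc.pow 2))
      (fun x hx => by
        have h1 := (hφd x (Set.Ioo_subset_Icc_self hx)).mul ((hd x hx).pow 2)
        have h2 : HasDerivAt F (F' x) x := by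
          refine h1.congr_deriv ?_
          simp only [hF', Pi.pow_apply]
          ring
        exact h2.hasDerivWithinAt) hF'int]
    simp [hF, ha, hb]
  have hpt : ∀ x ∈ Set.Icc a b, (G x - φ x * f x)^2 + F' x = (G x)^2 - c^2 * (f x)^2 := by
    intro x hx
    have hs := (hsin x hx).ne'
    have hsc := Real.sin_sq_add_cos_sq (θ x)
    have hφsq : (φ x)^2 = c^2/(Real.sin (θ x))^2 - c^2 := by
      simp only [hφ]
      field_simp
      linear_combination hsc
    simp only [hF']
    linear_combination (f x)^2 * hφsq
  have hGint : IntervalIntegrable (fun x => (G x)^2) volume a b := by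
    apply ContinuousOn.intervalIntegrable; rw [huIcc]; exact hGc.pow 2
  have hfint : IntervalIntegrable (fun x => (f x)^2) volume a b := by
    apply ContinuousOn.intervalIntegrable; rw [huIcc]; exact hfc.pow 2
  have hsq_int : IntervalIntegrable (fun x => (G x - φ x * f x)^2) volume a b := by
    apply ContinuousOn.intervalIntegrable; rw [huIcc]
    exact (hGc.sub (hφc.mul hfc)).pow 2
  have hkey : (∫ x in a..b, (G x - φ x * f x)^2) + ∫ x in a..b, F' x
      = (∫ x in a..b, (G x)^2) - c^2 * ∫ x in a..b, (f x)^2 := by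
    rw [← intervalIntegral.integral_add hsq_int hF'int,
        ← intervalIntegral.integral_const_mul,
        ← intervalIntegral.integral_sub hGint (hfint.const_mul (c^2))]
    apply intervalIntegral.integral_congr
    intro x hx
    rw [huIcc] at hx
    exact hpt x hx
  have hnn : 0 ≤ ∫ x in a..b, (G x - φ x * f x)^2 :=
    intervalIntegral.integral_nonneg hab' (fun x _ => sq_nonneg _)
  rw [hFTC, add_zero] at hkey
  have h2 : c^2 * ∫ x in a..b, (f x)^2 ≤ ∫ x in a..b, (G x)^2 := by linarith
  have hπ : (0:ℝ) < Real.pi := Real.pi_pos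
  have hfpos : 0 ≤ ∫ x in a..b, (f x)^2 :=
    intervalIntegral.integral_nonneg hab' (fun x _ => sq_nonneg _)
  have hcc : c^2 = Real.pi^2 / (b - a + δ)^2 := by rw [hc, div_pow]
  rw [hcc] at h2
  rw [div_mul_eq_mul_div, div_le_iff₀ (by positivity)] at h2
  rw [div_pow, div_mul_eq_mul_div, le_div_iff₀ (by positivity : (0:ℝ) < Real.pi^2)]
  nlinarith [h2]

lemma wirtinger (a b : ℝ) (hab : a < b) (f G : ℝ → ℝ)
    (hfc : ContinuousOn f (Set.Icc a b)) (hGc : ContinuousOn G (Set.Icc a b))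
    (hd : ∀ x ∈ Set.Ioo a b, HasDerivAt f (G x) x)
    (ha : f a = 0) (hb : f b = 0) :
    ∫ x in a..b, (f x)^2 ≤ ((b - a)/Real.pi)^2 * ∫ x in a..b, (G x)^2 := by
  have htend : Filter.Tendsto
      (fun δ : ℝ => ((b - a + δ)/Real.pi)^2 * ∫ x in a..b, (G x)^2)
      (nhdsWithin 0 (Set.Ioi 0))
      (nhds (((b - a)/Real.pi)^2 * ∫ x in a..b, (G x)^2)) := by
    apply Filter.Tendsto.mono_left _ nhdsWithin_le_nhds
    have hcont : Continuous (fun δ : ℝ => ((b - a + δ)/Real.pi)^2 * ∫ x in a..b, (G x)^2) := by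
      fun_prop
    have := hcont.tendsto 0
    simpa using this
  exact ge_of_tendsto htend (Filter.eventually_of_mem self_mem_nhdsWithin
    (fun δ hδ => wirtinger_aux a b hab f G hfc hGc hd ha hb δ hδ))

theorem weighted_poincare_annulus
    (R₁ R₂ : ℝ) (hR₁ : 0 < R₁) (hR : R₁ < R₂)
    (f : ℝ → ℝ) (hf : ContDiffOn ℝ 1 f (Set.Icc R₁ R₂))
    (hb1 : f R₁ = 0) (hb2 : f R₂ = 0) :
    ∫ r in R₁..R₂, (f r) ^ 2 * r ≤
      (R₂ * (R₂ - R₁) ^ 2 / (R₁ * Real.pi ^ 2)) * ∫ r in R₁..R₂, (deriv f r) ^ 2 * r := by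
  set G : ℝ → ℝ := derivWithin f (Set.Icc R₁ R₂) with hG
  have huD : UniqueDiffOn ℝ (Set.Icc R₁ R₂) := uniqueDiffOn_Icc hR
  have hfc : ContinuousOn f (Set.Icc R₁ R₂) := hf.continuousOn
  have hGc : ContinuousOn G (Set.Icc R₁ R₂) := hf.continuousOn_derivWithin huD le_rfl
  have hd : ∀ x ∈ Set.Ioo R₁ R₂, HasDerivAt f (G x) x := by
    intro x hx
    have hmem : Set.Icc R₁ R₂ ∈ nhds x := Icc_mem_nhds hx.1 hx.2
    have := ((hf.differentiableOn one_ne_zero x (Set.Ioo_subset_Icc_self hx)).hasDerivWithinAt)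
    exact this.hasDerivAt hmem
  have hderiv_eq : ∀ x ∈ Set.Ioo R₁ R₂, deriv f x = G x := fun x hx => (hd x hx).deriv
  have huIcc : Set.uIcc R₁ R₂ = Set.Icc R₁ R₂ := Set.uIcc_of_le hR.le
  -- replace deriv by G in the RHS integral
  have hae : ∫ r in R₁..R₂, (deriv f r)^2 * r = ∫ r in R₁..R₂, (G r)^2 * r := by
    apply intervalIntegral.integral_congr_ae
    have hne : ∀ᵐ x : ℝ, x ≠ R₁ ∧ x ≠ R₂ := by
      have h1 : ∀ᵐ x : ℝ, x ≠ R₁ := by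
        rw [MeasureTheory.ae_iff, show {x : ℝ | ¬ x ≠ R₁} = {R₁} by ext x; simp]
        exact Real.volume_singleton
      have h2 : ∀ᵐ x : ℝ, x ≠ R₂ := by
        rw [MeasureTheory.ae_iff, show {x : ℝ | ¬ x ≠ R₂} = {R₂} by ext x; simp]
        exact Real.volume_singleton
      exact h1.and h2
    filter_upwards [hne] with x hx hxI
    rw [Set.uIoc_of_le hR.le] at hxI
    have : x ∈ Set.Ioo R₁ R₂ := ⟨hxI.1, lt_of_le_of_ne hxI.2 hx.2⟩
    rw [hderiv_eq x this]
  rw [hae]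
  -- step 1
  have hint_fw : IntervalIntegrable (fun r => (f r)^2 * r) volume R₁ R₂ := by
    apply ContinuousOn.intervalIntegrable; rw [huIcc]
    exact (hfc.pow 2).mul continuousOn_id
  have hint_f : IntervalIntegrable (fun r => (f r)^2) volume R₁ R₂ := by
    apply ContinuousOn.intervalIntegrable; rw [huIcc]; exact hfc.pow 2
  have hint_G : IntervalIntegrable (fun r => (G r)^2) volume R₁ R₂ := by
    apply ContinuousOn.intervalIntegrable; rw [huIcc]; exact hGc.pow 2
  have hint_Gw : IntervalIntegrable (fun r => (G r)^2 * r) volume R₁ R₂ := by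
    apply ContinuousOn.intervalIntegrable; rw [huIcc]
    exact (hGc.pow 2).mul continuousOn_id
  have step1 : ∫ r in R₁..R₂, (f r)^2 * r ≤ R₂ * ∫ r in R₁..R₂, (f r)^2 := by
    rw [← intervalIntegral.integral_const_mul]
    apply intervalIntegral.integral_mono_on hR.le hint_fw (hint_f.const_mul R₂)
    intro x hx
    have : x ≤ R₂ := hx.2
    nlinarith [sq_nonneg (f x)]
  have step2 : ∫ r in R₁..R₂, (f r)^2 ≤ ((R₂ - R₁)/Real.pi)^2 * ∫ r in R₁..R₂, (G r)^2 :=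
    wirtinger R₁ R₂ hR f G hfc hGc hd hb1 hb2
  have step3 : ∫ r in R₁..R₂, (G r)^2 ≤ (1/R₁) * ∫ r in R₁..R₂, (G r)^2 * r := by
    rw [← intervalIntegral.integral_const_mul]
    apply intervalIntegral.integral_mono_on hR.le hint_G (hint_Gw.const_mul (1/R₁))
    intro x hx
    have hx1 : R₁ ≤ x := hx.1
    rw [div_mul_eq_mul_div, one_mul, le_div_iff₀ hR₁]
    nlinarith [sq_nonneg (G x)]
  have hGw_nn : 0 ≤ ∫ r in R₁..R₂, (G r)^2 * r :=
    intervalIntegral.integral_nonneg hR.le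
      (fun x hx => mul_nonneg (sq_nonneg _) (le_trans hR₁.le hx.1))
  have hπ : (0:ℝ) < Real.pi := Real.pi_pos
  calc ∫ r in R₁..R₂, (f r)^2 * r
      ≤ R₂ * ∫ r in R₁..R₂, (f r)^2 := step1
    _ ≤ R₂ * (((R₂ - R₁)/Real.pi)^2 * ∫ r in R₁..R₂, (G r)^2) :=
        mul_le_mul_of_nonneg_left step2 (by linarith)
    _ ≤ R₂ * (((R₂ - R₁)/Real.pi)^2 * ((1/R₁) * ∫ r in R₁..R₂, (G r)^2 * r)) := by
        apply mul_le_mul_of_nonneg_left _ (by linarith : (0:ℝ) ≤ R₂)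
        exact mul_le_mul_of_nonneg_left step3 (by positivity)
    _ = (R₂ * (R₂ - R₁) ^ 2 / (R₁ * Real.pi ^ 2)) * ∫ r in R₁..R₂, (G r)^2 * r := by
        field_simp
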